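/- Suppose ξ¹, ξ² : [0,T] → M_F(𝒳) are two solutions of the limit equation ⟨ξ_t,f⟩ = ⟨ξ_0,f⟩ + ∫₀ᵗ∫(r(x) - C*ξ_s(x))f(x)ξ_s(dx)ds + ∫₀ᵗ∫∫ f(x)·(τ(x,y)-τ(y,x))/(β+μ⟨ξ_s,1⟩)·ξ_s(dy)ξ_s(dx)ds with the same initial condition, with r, C, τ bounded continuous, β > 0, μ ≥ 0, and total masses bounded above by Ā and below by A̲ > 0 on [0,T]. Then there exists a constant K(T) such that ‖ξ¹_t - ξ²_t‖_TV ≤ K(T)·∫₀ᵗ ‖ξ¹_s - ξ²_s‖_TV ds for all t ∈ [0,T], and hence by Gronwall's inequality ξ¹_t = ξ²_t for all t ∈ [0,T]. -/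

import Mathlib

open MeasureTheory intervalIntegral

/-- Total variation distance between two finite measures, as the supremum over bounded
measurable test functions `f` with `‖f‖_∞ ≤ 1` of `|∫ f dν₁ - ∫ f dν₂|`. -/
noncomputable def tvDist {𝒳 : Type*} [MeasurableSpace 𝒳] (ν₁ ν₂ : Measure 𝒳) : ℝ :=
  sSup { a : ℝ | ∃ f : 𝒳 → ℝ, Measurable f ∧ (∀ x, |f x| ≤ 1) ∧
    a = |(∫ x, f x ∂ν₁) - ∫ x, f x ∂ν₂| }

/-- A solution of the limiting transfer equation, tested against all bounded measurable
functions of sup-norm at most 1. -/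
def IsSolutionTransferEq {𝒳 : Type*} [MeasurableSpace 𝒳] [TopologicalSpace 𝒳]
    (r : 𝒳 → ℝ) (C : 𝒳 → 𝒳 → ℝ) (τ : 𝒳 → 𝒳 → ℝ) (β μ T : ℝ)
    (ξ : ℝ → Measure 𝒳) : Prop :=
  ∀ f : 𝒳 → ℝ, Measurable f → (∀ x, |f x| ≤ 1) → ∀ t ∈ Set.Icc (0:ℝ) T,
    (∫ x, f x ∂(ξ t)) = (∫ x, f x ∂(ξ 0))
      + ∫ s in (0:ℝ)..t,
          ((∫ x, (r x - ∫ y, C x y ∂(ξ s)) * f x ∂(ξ s))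
            + ∫ x, (f x * (∫ y, (τ x y - τ y x) ∂(ξ s))
                      / (β + μ * ((ξ s) Set.univ).toReal)) ∂(ξ s))

section TVHelpers

variable {𝒳 : Type*} [MeasurableSpace 𝒳]

lemma integrable_of_abs_le {h : 𝒳 → ℝ} (hm : Measurable h) {B : ℝ}
    (hb : ∀ x, |h x| ≤ B) (ν : Measure 𝒳) [IsFiniteMeasure ν] : Integrable h ν :=
  (integrable_const B).mono' hm.aestronglyMeasurable
    (Filter.Eventually.of_forall fun x => by simpa [Real.norm_eq_abs] using hb x)

lemma abs_integral_le_mass {h : 𝒳 → ℝ} (hb : ∀ x, |h x| ≤ 1)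
    (ν : Measure 𝒳) [IsFiniteMeasure ν] : |∫ x, h x ∂ν| ≤ (ν Set.univ).toReal := by
  have := norm_integral_le_of_norm_le_const (μ := ν) (f := h) (C := 1)
    (Filter.Eventually.of_forall fun x => by simpa [Real.norm_eq_abs] using hb x)
  simpa [Real.norm_eq_abs, measureReal_def] using this

lemma tv_zero_mem (ν₁ ν₂ : Measure 𝒳) :
    (0:ℝ) ∈ { a : ℝ | ∃ f : 𝒳 → ℝ, Measurable f ∧ (∀ x, |f x| ≤ 1) ∧
      a = |(∫ x, f x ∂ν₁) - ∫ x, f x ∂ν₂| } :=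
  ⟨fun _ => 0, measurable_const, fun _ => by simp, by simp⟩

lemma tv_bddAbove (ν₁ ν₂ : Measure 𝒳) [IsFiniteMeasure ν₁] [IsFiniteMeasure ν₂] :
    BddAbove { a : ℝ | ∃ f : 𝒳 → ℝ, Measurable f ∧ (∀ x, |f x| ≤ 1) ∧
      a = |(∫ x, f x ∂ν₁) - ∫ x, f x ∂ν₂| } := by
  refine ⟨(ν₁ Set.univ).toReal + (ν₂ Set.univ).toReal, ?_⟩
  rintro a ⟨f, hf, hf1, rfl⟩
  calc |(∫ x, f x ∂ν₁) - ∫ x, f x ∂ν₂| ≤ |∫ x, f x ∂ν₁| + |∫ x, f x ∂ν₂| := abs_sub _ _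
    _ ≤ (ν₁ Set.univ).toReal + (ν₂ Set.univ).toReal :=
      add_le_add (abs_integral_le_mass hf1 ν₁) (abs_integral_le_mass hf1 ν₂)

lemma tv_nonneg (ν₁ ν₂ : Measure 𝒳) [IsFiniteMeasure ν₁] [IsFiniteMeasure ν₂] :
    0 ≤ tvDist ν₁ ν₂ :=
  le_csSup (tv_bddAbove ν₁ ν₂) (tv_zero_mem ν₁ ν₂)

lemma abs_integral_sub_le_tv {h : 𝒳 → ℝ} (hm : Measurable h) (hb : ∀ x, |h x| ≤ 1)
    (ν₁ ν₂ : Measure 𝒳) [IsFiniteMeasure ν₁] [IsFiniteMeasure ν₂] :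
    |(∫ x, h x ∂ν₁) - ∫ x, h x ∂ν₂| ≤ tvDist ν₁ ν₂ :=
  le_csSup (tv_bddAbove ν₁ ν₂) ⟨h, hm, hb, rfl⟩

lemma abs_integral_sub_le_tv' {h : 𝒳 → ℝ} {B : ℝ} (hB : 0 < B)
    (hm : Measurable h) (hb : ∀ x, |h x| ≤ B)
    (ν₁ ν₂ : Measure 𝒳) [IsFiniteMeasure ν₁] [IsFiniteMeasure ν₂] :
    |(∫ x, h x ∂ν₁) - ∫ x, h x ∂ν₂| ≤ B * tvDist ν₁ ν₂ := by
  have key := abs_integral_sub_le_tv (h := fun x => h x / B) (hm.div_const B)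
    (fun x => by
      rw [abs_div, abs_of_pos hB]
      exact div_le_one_of_le₀ (hb x) hB.le) ν₁ ν₂
  rw [MeasureTheory.integral_div, MeasureTheory.integral_div, ← sub_div, abs_div,
    abs_of_pos hB, div_le_iff₀ hB] at key
  linarith [key]

lemma tv_le {c : ℝ} (hc : 0 ≤ c) (ν₁ ν₂ : Measure 𝒳)
    (h : ∀ f : 𝒳 → ℝ, Measurable f → (∀ x, |f x| ≤ 1) →
      |(∫ x, f x ∂ν₁) - ∫ x, f x ∂ν₂| ≤ c) : tvDist ν₁ ν₂ ≤ c :=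
  Real.sSup_le (by rintro a ⟨f, hf, hf1, rfl⟩; exact h f hf hf1) hc

lemma div_sub_div_abs_le {β p₁ p₂ q₁ q₂ : ℝ} (hβ : 0 < β) (h₁ : β ≤ q₁) (h₂ : β ≤ q₂) :
    |p₁ / q₁ - p₂ / q₂| ≤ |p₁ - p₂| / β + |p₂| * |q₁ - q₂| / β ^ 2 := by
  have hq₁ : 0 < q₁ := hβ.trans_le h₁
  have hq₂ : 0 < q₂ := hβ.trans_le h₂
  have key : p₁ / q₁ - p₂ / q₂ = (p₁ - p₂) / q₁ + p₂ * (q₂ - q₁) / (q₁ * q₂) := by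
    field_simp; ring
  rw [key]
  refine (abs_add_le _ _).trans (add_le_add ?_ ?_)
  · rw [abs_div, abs_of_pos hq₁]
    exact div_le_div_of_nonneg_left (abs_nonneg _) hβ h₁
  · rw [abs_div, abs_mul, abs_of_pos (mul_pos hq₁ hq₂), abs_sub_comm q₂ q₁]
    exact div_le_div₀ (by positivity) le_rfl (by positivity) (by nlinarith)

end TVHelpers

set_option maxHeartbeats 2000000

/-- Uniqueness for the limiting integro-differential equation: two solutions with the
same initial condition and total masses bounded above and below on [0,T] satisfy a
Gronwall-type inequality in total variation, hence coincide on [0,T]. -/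
theorem uniqueness_limit_equation
    {𝒳 : Type*} [MeasurableSpace 𝒳] [MetricSpace 𝒳] [CompactSpace 𝒳] [BorelSpace 𝒳]
    (r : 𝒳 → ℝ) (C τ : 𝒳 → 𝒳 → ℝ)
    (hr : Continuous r) (hC : Continuous (Function.uncurry C))
    (hτ : Continuous (Function.uncurry τ))
    (β μ T Abar Alow : ℝ) (hβ : 0 < β) (hμ : 0 ≤ μ) (hT : 0 < T) (hA : 0 < Alow)
    (ξ₁ ξ₂ : ℝ → Measure 𝒳)
    (hfin₁ : ∀ t, IsFiniteMeasure (ξ₁ t)) (hfin₂ : ∀ t, IsFiniteMeasure (ξ₂ t))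
    (hmass : ∀ t ∈ Set.Icc (0:ℝ) T,
      Alow ≤ ((ξ₁ t) Set.univ).toReal ∧ ((ξ₁ t) Set.univ).toReal ≤ Abar ∧
      Alow ≤ ((ξ₂ t) Set.univ).toReal ∧ ((ξ₂ t) Set.univ).toReal ≤ Abar)
    (hsol₁ : IsSolutionTransferEq r C τ β μ T ξ₁)
    (hsol₂ : IsSolutionTransferEq r C τ β μ T ξ₂)
    (hinit : ξ₁ 0 = ξ₂ 0) :
    (∃ K : ℝ, 0 < K ∧ ∀ t ∈ Set.Icc (0:ℝ) T,
      tvDist (ξ₁ t) (ξ₂ t) ≤ K * ∫ s in (0:ℝ)..t, tvDist (ξ₁ s) (ξ₂ s)) ∧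
    ∀ t ∈ Set.Icc (0:ℝ) T, ξ₁ t = ξ₂ t := by
  classical
  haveI : ∀ t, IsFiniteMeasure (ξ₁ t) := hfin₁
  haveI : ∀ t, IsFiniteMeasure (ξ₂ t) := hfin₂
  have hT0mem : (0:ℝ) ∈ Set.Icc (0:ℝ) T := ⟨le_refl _, hT.le⟩
  have hAbar : 0 < Abar :=
    lt_of_lt_of_le hA ((hmass 0 hT0mem).1.trans' le_rfl |>.trans (hmass 0 hT0mem).2.1)
  -- bounds for the coefficients
  obtain ⟨Rb, hRb0, hRb⟩ : ∃ Rb : ℝ, 0 ≤ Rb ∧ ∀ x, |r x| ≤ Rb := by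
    refine ⟨‖BoundedContinuousFunction.mkOfCompact (⟨r, hr⟩ : C(𝒳, ℝ))‖, norm_nonneg _,
      fun x => ?_⟩
    simpa [Real.norm_eq_abs] using
      (BoundedContinuousFunction.mkOfCompact (⟨r, hr⟩ : C(𝒳, ℝ))).norm_coe_le_norm x
  obtain ⟨Cb, hCb0, hCb⟩ : ∃ Cb : ℝ, 0 ≤ Cb ∧ ∀ x y, |C x y| ≤ Cb := by
    refine ⟨‖BoundedContinuousFunction.mkOfCompact (⟨Function.uncurry C, hC⟩ : C(𝒳 × 𝒳, ℝ))‖,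
      norm_nonneg _, fun x y => ?_⟩
    simpa [Real.norm_eq_abs] using
      (BoundedContinuousFunction.mkOfCompact
        (⟨Function.uncurry C, hC⟩ : C(𝒳 × 𝒳, ℝ))).norm_coe_le_norm (x, y)
  obtain ⟨τb, hτb0, hτb⟩ : ∃ τb : ℝ, 0 ≤ τb ∧ ∀ x y, |τ x y| ≤ τb := by
    refine ⟨‖BoundedContinuousFunction.mkOfCompact (⟨Function.uncurry τ, hτ⟩ : C(𝒳 × 𝒳, ℝ))‖,
      norm_nonneg _, fun x y => ?_⟩
    simpa [Real.norm_eq_abs] using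
      (BoundedContinuousFunction.mkOfCompact
        (⟨Function.uncurry τ, hτ⟩ : C(𝒳 × 𝒳, ℝ))).norm_coe_le_norm (x, y)
  -- the clamping function
  set cl : ℝ → ℝ := fun s => max 0 (min s T) with hcldef
  have hclmem : ∀ s, cl s ∈ Set.Icc (0:ℝ) T :=
    fun s => ⟨le_max_left _ _, max_le hT.le (min_le_right _ _)⟩
  have hcleq : ∀ s ∈ Set.Icc (0:ℝ) T, cl s = s := by
    intro s hs
    simp only [hcldef]
    rw [min_eq_left hs.2, max_eq_right hs.1]
  have hclmeas : Measurable cl :=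
    (continuous_const.max (continuous_id.min continuous_const)).measurable
  -- generic bounds on inner integrals
  have hqge : ∀ (ν : Measure 𝒳), β ≤ β + μ * ((ν Set.univ).toReal) :=
    fun ν => le_add_of_nonneg_right (mul_nonneg hμ ENNReal.toReal_nonneg)
  have hCfb : ∀ (ν : Measure 𝒳), IsFiniteMeasure ν → (ν Set.univ).toReal ≤ Abar →
      ∀ x, |∫ y, C x y ∂ν| ≤ Cb * Abar := by
    intro ν hν hm x
    haveI := hν
    have hb : ∀ᵐ y ∂ν, ‖C x y‖ ≤ Cb :=
      Filter.Eventually.of_forall fun y => by rw [Real.norm_eq_abs]; exact hCb x y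
    have h := norm_integral_le_of_norm_le_const (μ := ν) hb
    rw [Real.norm_eq_abs] at h
    calc |∫ y, C x y ∂ν| ≤ Cb * (ν Set.univ).toReal := h
      _ ≤ Cb * Abar := mul_le_mul_of_nonneg_left hm hCb0
  have hDb : ∀ (ν : Measure 𝒳), IsFiniteMeasure ν → (ν Set.univ).toReal ≤ Abar →
      ∀ x, |∫ y, (τ x y - τ y x) ∂ν| ≤ 2 * τb * Abar := by
    intro ν hν hm x
    haveI := hν
    have hb : ∀ᵐ y ∂ν, ‖τ x y - τ y x‖ ≤ 2 * τb := by
      refine Filter.Eventually.of_forall fun y => ?_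
      rw [Real.norm_eq_abs]
      have h1 := abs_sub (τ x y) (τ y x)
      have h2 := hτb x y
      have h3 := hτb y x
      linarith
    have h := norm_integral_le_of_norm_le_const (μ := ν) hb
    rw [Real.norm_eq_abs] at h
    calc |∫ y, (τ x y - τ y x) ∂ν| ≤ 2 * τb * (ν Set.univ).toReal := h
      _ ≤ 2 * τb * Abar := mul_le_mul_of_nonneg_left hm (by positivity)
  -- a uniform bound for the time-integrand
  set M₀ : ℝ := Abar * (Rb + Cb * Abar) + Abar * (2 * τb * Abar / β) with hM₀def
  have hM₀0 : 0 ≤ M₀ := by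
    rw [hM₀def]
    have h1 : 0 ≤ Cb * Abar := mul_nonneg hCb0 hAbar.le
    have h2 : 0 ≤ 2 * τb * Abar / β := by positivity
    nlinarith [hAbar.le, hRb0]
  have hGb : ∀ (ν : Measure 𝒳), IsFiniteMeasure ν → (ν Set.univ).toReal ≤ Abar →
      ∀ f : 𝒳 → ℝ, (∀ x, |f x| ≤ 1) →
      |(∫ x, (r x - ∫ y, C x y ∂ν) * f x ∂ν)
        + ∫ x, f x * (∫ y, (τ x y - τ y x) ∂ν) / (β + μ * (ν Set.univ).toReal) ∂ν| ≤ M₀ := by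
    intro ν hν hm f hf1
    haveI := hν
    have e₁ : |∫ x, (r x - ∫ y, C x y ∂ν) * f x ∂ν| ≤ (Rb + Cb * Abar) * Abar := by
      have hb : ∀ᵐ x ∂ν, ‖(r x - ∫ y, C x y ∂ν) * f x‖ ≤ Rb + Cb * Abar := by
        refine Filter.Eventually.of_forall fun x => ?_
        rw [Real.norm_eq_abs, abs_mul]
        have h1 : |r x - ∫ y, C x y ∂ν| ≤ Rb + Cb * Abar :=
          (abs_sub _ _).trans (add_le_add (hRb x) (hCfb ν hν hm x))
        calc |r x - ∫ y, C x y ∂ν| * |f x| ≤ (Rb + Cb * Abar) * 1 :=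
              mul_le_mul h1 (hf1 x) (abs_nonneg _) (by positivity)
          _ = Rb + Cb * Abar := mul_one _
      have h := norm_integral_le_of_norm_le_const (μ := ν) hb
      rw [Real.norm_eq_abs] at h
      exact h.trans (mul_le_mul_of_nonneg_left hm (by positivity))
    have e₂ : |∫ x, f x * (∫ y, (τ x y - τ y x) ∂ν) / (β + μ * (ν Set.univ).toReal) ∂ν|
        ≤ (2 * τb * Abar / β) * Abar := by
      have hq : (0:ℝ) < β + μ * (ν Set.univ).toReal := lt_of_lt_of_le hβ (hqge ν)
      have hb : ∀ᵐ x ∂ν, ‖f x * (∫ y, (τ x y - τ y x) ∂ν) / (β + μ * (ν Set.univ).toReal)‖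
          ≤ 2 * τb * Abar / β := by
        refine Filter.Eventually.of_forall fun x => ?_
        rw [Real.norm_eq_abs, abs_div, abs_of_pos hq]
        have h1 : |f x * (∫ y, (τ x y - τ y x) ∂ν)| ≤ 2 * τb * Abar := by
          rw [abs_mul]
          calc |f x| * |∫ y, (τ x y - τ y x) ∂ν| ≤ 1 * (2 * τb * Abar) :=
                mul_le_mul (hf1 x) (hDb ν hν hm x) (abs_nonneg _) zero_le_one
            _ = 2 * τb * Abar := one_mul _
        exact div_le_div₀ (by positivity) h1 hβ (hqge ν)
      have h := norm_integral_le_of_norm_le_const (μ := ν) hb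
      rw [Real.norm_eq_abs] at h
      exact h.trans (mul_le_mul_of_nonneg_left hm (by positivity))
    calc |(∫ x, (r x - ∫ y, C x y ∂ν) * f x ∂ν)
        + ∫ x, f x * (∫ y, (τ x y - τ y x) ∂ν) / (β + μ * (ν Set.univ).toReal) ∂ν|
        ≤ (Rb + Cb * Abar) * Abar + (2 * τb * Abar / β) * Abar :=
          (abs_add_le _ _).trans (add_le_add e₁ e₂)
      _ = M₀ := by rw [hM₀def]; ring
  -- measurability of the clamped measure path, extracted from the equation itself
  have pathMeas : ∀ (ξ : ℝ → Measure 𝒳), (∀ t, IsFiniteMeasure (ξ t)) →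
      (∀ t ∈ Set.Icc (0:ℝ) T, ((ξ t) Set.univ).toReal ≤ Abar) →
      IsSolutionTransferEq r C τ β μ T ξ →
      Measurable (fun s => ξ (cl s)) := by
    intro ξ hfin hmb hsol
    haveI : ∀ t, IsFiniteMeasure (ξ t) := hfin
    apply Measure.measurable_of_measurable_coe
    intro A hA
    set f : 𝒳 → ℝ := A.indicator 1 with hfdef
    have hfm : Measurable f := measurable_one.indicator hA
    have hf1 : ∀ x, |f x| ≤ 1 := by
      intro x
      by_cases hx : x ∈ A <;> simp [hfdef, Set.indicator, hx]
    set g : ℝ → ℝ := fun s =>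
      (∫ x, (r x - ∫ y, C x y ∂(ξ s)) * f x ∂(ξ s))
        + ∫ x, f x * (∫ y, (τ x y - τ y x) ∂(ξ s)) / (β + μ * ((ξ s) Set.univ).toReal) ∂(ξ s)
      with hgdef
    have hgb : ∀ s ∈ Set.Icc (0:ℝ) T, |g s| ≤ M₀ :=
      fun s hs => hGb (ξ s) (hfin s) (hmb s hs) f hf1
    set U : Set ℝ := {u | IntegrableOn g (Set.Ioc 0 u) volume} with hUdef
    have hUmono : ∀ u v : ℝ, u ≤ v → v ∈ U → u ∈ U := fun u v huv hv =>
      hv.mono_set (Set.Ioc_subset_Ioc le_rfl huv)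
    have hUord : U.OrdConnected := by
      constructor
      intro x hx y hy z hz
      exact hUmono z y hz.2 hy
    have hUmeas : MeasurableSet U := hUord.measurableSet
    set Ifun : ℝ → ℝ := fun u => ∫ s in (0:ℝ)..u, g s with hIdef
    have hII : ∀ u : ℝ, 0 ≤ u → u ∈ U → IntervalIntegrable g volume 0 u := fun u hu huU =>
      (intervalIntegrable_iff_integrableOn_Ioc_of_le hu).mpr huU
    have hIdiff : ∀ u v : ℝ, u ∈ U ∩ Set.Icc 0 T → v ∈ U ∩ Set.Icc 0 T → u ≤ v →
        |Ifun v - Ifun u| ≤ M₀ * |v - u| := by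
      intro u v hu hv huv
      have h1 : IntervalIntegrable g volume 0 u := hII u hu.2.1 hu.1
      have h2 : IntervalIntegrable g volume u v :=
        (intervalIntegrable_iff_integrableOn_Ioc_of_le huv).mpr
          (hv.1.mono_set (Set.Ioc_subset_Ioc hu.2.1 le_rfl))
      have hadd := intervalIntegral.integral_add_adjacent_intervals h1 h2
      have hIv : Ifun v - Ifun u = ∫ s in u..v, g s := by
        rw [hIdef]; simp only []
        linarith [hadd]
      rw [hIv]
      have := intervalIntegral.norm_integral_le_of_norm_le_const (C := M₀)
        (f := g) (a := u) (b := v) (fun x hx => by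
          rw [Set.uIoc_of_le huv] at hx
          rw [Real.norm_eq_abs]
          exact hgb x ⟨hu.2.1.trans hx.1.le, hx.2.trans hv.2.2⟩)
      rw [Real.norm_eq_abs] at this
      exact this.trans_eq (by rw [abs_sub_comm])
    have hlip : LipschitzOnWith (Real.toNNReal M₀) Ifun (U ∩ Set.Icc 0 T) := by
      apply LipschitzOnWith.of_dist_le_mul
      intro x hx y hy
      rw [Real.dist_eq, Real.dist_eq, Real.coe_toNNReal _ hM₀0]
      rcases le_total x y with h | h
      · rw [abs_sub_comm, abs_sub_comm x y]
        exact hIdiff x y hx hy h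
      · exact hIdiff y x hy hx h
    obtain ⟨ext, hextL, hexteq⟩ := hlip.extend_real
    have hJmeas : Measurable ((U ∩ Set.Icc 0 T).piecewise ext (fun _ => (0:ℝ))) :=
      Measurable.piecewise (hUmeas.inter measurableSet_Icc)
        hextL.continuous.measurable measurable_const
    have hIJ : ∀ u ∈ Set.Icc (0:ℝ) T,
        Ifun u = (U ∩ Set.Icc 0 T).piecewise ext (fun _ => (0:ℝ)) u := by
      intro u hu
      by_cases huU : u ∈ U
      · rw [Set.piecewise_eq_of_mem _ _ _ (Set.mem_inter huU hu)]
        exact hexteq (Set.mem_inter huU hu)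
      · rw [Set.piecewise_eq_of_notMem _ _ _ (fun hmem => huU hmem.1)]
        apply intervalIntegral.integral_undef
        intro hcon
        exact huU ((intervalIntegrable_iff_integrableOn_Ioc_of_le hu.1).mp hcon)
    have heqn : ∀ s : ℝ, ((ξ (cl s)) A).toReal = (∫ x, f x ∂(ξ 0)) +
        (U ∩ Set.Icc 0 T).piecewise ext (fun _ => (0:ℝ)) (cl s) := by
      intro s
      have hsol' := hsol f hfm hf1 (cl s) (hclmem s)
      rw [show ((ξ (cl s)) A).toReal = (ξ (cl s)).real A from rfl, ← integral_indicator_one hA]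
      rw [show (∫ x, A.indicator 1 x ∂(ξ (cl s))) = ∫ x, f x ∂(ξ (cl s)) from rfl]
      rw [hsol']
      congr 1
      rw [← hIJ (cl s) (hclmem s)]
    have hmR : Measurable fun s => ((ξ (cl s)) A).toReal := by
      simp only [heqn]
      exact measurable_const.add (hJmeas.comp hclmeas)
    have h2 : (fun s => (ξ (cl s)) A) = fun s => ENNReal.ofReal (((ξ (cl s)) A).toReal) := by
      funext s
      rw [ENNReal.ofReal_toReal (measure_ne_top _ _)]
    rw [h2]
    exact ENNReal.measurable_ofReal.comp hmR
  -- measurability of the time-integrand, via kernel theory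
  have hGmeasGen : ∀ (κ : ProbabilityTheory.Kernel ℝ 𝒳), ProbabilityTheory.IsFiniteKernel κ →
      ∀ f : 𝒳 → ℝ, Measurable f →
      Measurable (fun s => (∫ x, (r x - ∫ y, C x y ∂(κ s)) * f x ∂(κ s))
        + ∫ x, f x * (∫ y, (τ x y - τ y x) ∂(κ s)) / (β + μ * ((κ s) Set.univ).toReal) ∂(κ s)) := by
    intro κ hκ f hfm
    haveI := hκ
    have hCm : Measurable fun p : ℝ × 𝒳 => ∫ y, C p.2 y ∂(κ p.1) := by
      have h := MeasureTheory.StronglyMeasurable.integral_kernel_prod_right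
        (κ := κ.comap Prod.fst measurable_fst)
        (f := fun (p : ℝ × 𝒳) (y : 𝒳) => C p.2 y)
        (Measurable.stronglyMeasurable
          (hC.measurable.comp (measurable_fst.snd.prodMk measurable_snd)))
      have h2 := h.measurable
      simp only [ProbabilityTheory.Kernel.comap_apply] at h2
      exact h2
    have hDm : Measurable fun p : ℝ × 𝒳 => ∫ y, (τ p.2 y - τ y p.2) ∂(κ p.1) := by
      have h := MeasureTheory.StronglyMeasurable.integral_kernel_prod_right
        (κ := κ.comap Prod.fst measurable_fst)
        (f := fun (p : ℝ × 𝒳) (y : 𝒳) => τ p.2 y - τ y p.2)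
        (Measurable.stronglyMeasurable
          ((hτ.measurable.comp (measurable_fst.snd.prodMk measurable_snd)).sub
            (hτ.measurable.comp (measurable_snd.prodMk measurable_fst.snd))))
      have h2 := h.measurable
      simp only [ProbabilityTheory.Kernel.comap_apply] at h2
      exact h2
    have hqm : Measurable fun s : ℝ => β + μ * ((κ s) Set.univ).toReal :=
      measurable_const.add (measurable_const.mul
        ((κ.measurable_coe MeasurableSet.univ).ennreal_toReal))
    have h₁ : Measurable fun s => ∫ x, (r x - ∫ y, C x y ∂(κ s)) * f x ∂(κ s) := by
      have h := MeasureTheory.StronglyMeasurable.integral_kernel_prod_right (κ := κ)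
        (f := fun (s : ℝ) (x : 𝒳) => (r x - ∫ y, C x y ∂(κ s)) * f x)
        (Measurable.stronglyMeasurable (show Measurable fun p : ℝ × 𝒳 =>
          (r p.2 - ∫ y, C p.2 y ∂(κ p.1)) * f p.2 from
          ((hr.measurable.comp measurable_snd).sub hCm).mul (hfm.comp measurable_snd)))
      exact h.measurable
    have h₂ : Measurable fun s =>
        ∫ x, f x * (∫ y, (τ x y - τ y x) ∂(κ s)) / (β + μ * ((κ s) Set.univ).toReal) ∂(κ s) := by
      have h := MeasureTheory.StronglyMeasurable.integral_kernel_prod_right (κ := κ)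
        (f := fun (s : ℝ) (x : 𝒳) =>
          f x * (∫ y, (τ x y - τ y x) ∂(κ s)) / (β + μ * ((κ s) Set.univ).toReal))
        (Measurable.stronglyMeasurable (show Measurable fun p : ℝ × 𝒳 =>
          f p.2 * (∫ y, (τ p.2 y - τ y p.2) ∂(κ p.1)) / (β + μ * ((κ p.1) Set.univ).toReal) from
          ((hfm.comp measurable_snd).mul hDm).div (hqm.comp measurable_fst)))
      exact h.measurable
    exact h₁.add h₂
  -- bounded measurable functions are interval integrable
  have hGII : ∀ g : ℝ → ℝ, Measurable g → (∀ s, |g s| ≤ M₀) →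
      ∀ a b : ℝ, IntervalIntegrable g volume a b := by
    intro g hg hb a b
    constructor <;>
      exact ((integrableOn_const_iff (C := M₀)).mpr (Or.inr measure_Ioc_lt_top)).mono'
        hg.aestronglyMeasurable
        (Filter.Eventually.of_forall fun x => by simpa [Real.norm_eq_abs] using hb x)
  -- the honest (junk-free) form of the equation
  have solRewrite : ∀ (ξ : ℝ → Measure 𝒳), (∀ t, IsFiniteMeasure (ξ t)) →
      (∀ t ∈ Set.Icc (0:ℝ) T, ((ξ t) Set.univ).toReal ≤ Abar) →
      IsSolutionTransferEq r C τ β μ T ξ →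
      ∀ f : 𝒳 → ℝ, Measurable f → (∀ x, |f x| ≤ 1) →
        (∀ a b : ℝ, IntervalIntegrable (fun s =>
            (∫ x, (r x - ∫ y, C x y ∂(ξ (cl s))) * f x ∂(ξ (cl s)))
            + ∫ x, f x * (∫ y, (τ x y - τ y x) ∂(ξ (cl s)))
                / (β + μ * ((ξ (cl s)) Set.univ).toReal) ∂(ξ (cl s))) volume a b)
        ∧ ∀ t ∈ Set.Icc (0:ℝ) T,
            (∫ x, f x ∂(ξ t)) = (∫ x, f x ∂(ξ 0)) + ∫ s in (0:ℝ)..t,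
              ((∫ x, (r x - ∫ y, C x y ∂(ξ (cl s))) * f x ∂(ξ (cl s)))
              + ∫ x, f x * (∫ y, (τ x y - τ y x) ∂(ξ (cl s)))
                  / (β + μ * ((ξ (cl s)) Set.univ).toReal) ∂(ξ (cl s))) := by
    intro ξ hfin hmb hsol f hfm hf1
    haveI : ∀ t, IsFiniteMeasure (ξ t) := hfin
    have hκmeas : Measurable fun s => ξ (cl s) := pathMeas ξ hfin hmb hsol
    set κ : ProbabilityTheory.Kernel ℝ 𝒳 := ⟨fun s => ξ (cl s), hκmeas⟩ with hκdef
    have hκapp : ∀ s, κ s = ξ (cl s) := fun s => rfl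
    haveI : ProbabilityTheory.IsFiniteKernel κ := by
      refine ⟨⟨ENNReal.ofReal Abar, ENNReal.ofReal_lt_top, fun s => ?_⟩⟩
      rw [hκapp s]
      exact (ENNReal.le_ofReal_iff_toReal_le (measure_ne_top _ _) hAbar.le).mpr
        (hmb _ (hclmem s))
    have hGmeas : Measurable (fun s =>
        (∫ x, (r x - ∫ y, C x y ∂(ξ (cl s))) * f x ∂(ξ (cl s)))
        + ∫ x, f x * (∫ y, (τ x y - τ y x) ∂(ξ (cl s)))
            / (β + μ * ((ξ (cl s)) Set.univ).toReal) ∂(ξ (cl s))) := by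
      have h := hGmeasGen κ ‹_› f hfm
      simpa only [hκapp] using h
    have hGbd : ∀ s, |(∫ x, (r x - ∫ y, C x y ∂(ξ (cl s))) * f x ∂(ξ (cl s)))
        + ∫ x, f x * (∫ y, (τ x y - τ y x) ∂(ξ (cl s)))
            / (β + μ * ((ξ (cl s)) Set.univ).toReal) ∂(ξ (cl s))| ≤ M₀ :=
      fun s => hGb (ξ (cl s)) (hfin _) (hmb _ (hclmem s)) f hf1
    refine ⟨fun a b => hGII _ hGmeas hGbd a b, ?_⟩
    intro t ht
    rw [hsol f hfm hf1 t ht]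
    congr 1
    apply intervalIntegral.integral_congr
    intro s hs
    rw [Set.uIcc_of_le ht.1] at hs
    simp only [hcleq s ⟨hs.1, hs.2.trans ht.2⟩]
  -- the contraction constant
  set Kc : ℝ := (Rb + Cb * Abar + 1) + (Cb + 1) * Abar + (2 * τb * Abar / β + 1)
      + ((2 * τb + 1) / β + 2 * τb * Abar * μ / β ^ 2) * Abar with hKcdef
  have hCbA : (0:ℝ) ≤ Cb * Abar := mul_nonneg hCb0 hAbar.le
  have hτbA : (0:ℝ) ≤ 2 * τb * Abar := mul_nonneg (mul_nonneg (by norm_num) hτb0) hAbar.le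
  have ha1 : (0:ℝ) < Rb + Cb * Abar + 1 := by linarith
  have ha2 : (0:ℝ) ≤ (Cb + 1) * Abar := mul_nonneg (by linarith) hAbar.le
  have hβ2 : (0:ℝ) < β ^ 2 := pow_pos hβ 2
  have ha3' : (0:ℝ) ≤ 2 * τb * Abar / β := div_nonneg hτbA hβ.le
  have ha3 : (0:ℝ) < 2 * τb * Abar / β + 1 := by linarith
  have hcst : (0:ℝ) ≤ (2 * τb + 1) / β + 2 * τb * Abar * μ / β ^ 2 :=
    add_nonneg (div_nonneg (by linarith) hβ.le) (div_nonneg (mul_nonneg hτbA hμ) hβ2.le)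
  have ha4 : (0:ℝ) ≤ ((2 * τb + 1) / β + 2 * τb * Abar * μ / β ^ 2) * Abar :=
    mul_nonneg hcst hAbar.le
  have hKc0 : 0 < Kc := by rw [hKcdef]; linarith
  -- the core contraction estimate
  have hcore : ∀ f : 𝒳 → ℝ, Measurable f → (∀ x, |f x| ≤ 1) →
      ∀ (ν₁ ν₂ : Measure 𝒳), IsFiniteMeasure ν₁ → IsFiniteMeasure ν₂ →
      (ν₁ Set.univ).toReal ≤ Abar → (ν₂ Set.univ).toReal ≤ Abar →
      |((∫ x, (r x - ∫ y, C x y ∂ν₁) * f x ∂ν₁)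
          + ∫ x, f x * (∫ y, (τ x y - τ y x) ∂ν₁) / (β + μ * ((ν₁ Set.univ)).toReal) ∂ν₁)
        - ((∫ x, (r x - ∫ y, C x y ∂ν₂) * f x ∂ν₂)
          + ∫ x, f x * (∫ y, (τ x y - τ y x) ∂ν₂) / (β + μ * ((ν₂ Set.univ)).toReal) ∂ν₂)|
        ≤ Kc * tvDist ν₁ ν₂ := by
    intro f hfm hf1 ν₁ ν₂ hν₁ hν₂ hm1 hm2
    haveI := hν₁; haveI := hν₂
    have hφ0 : 0 ≤ tvDist ν₁ ν₂ := tv_nonneg ν₁ ν₂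
    have hq₁ : β ≤ β + μ * (ν₁ Set.univ).toReal := hqge ν₁
    have hq₂ : β ≤ β + μ * (ν₂ Set.univ).toReal := hqge ν₂
    -- measurability of inner integrals
    have hCm₁ : Measurable fun x => ∫ y, C x y ∂ν₁ :=
      (MeasureTheory.StronglyMeasurable.integral_prod_right' (ν := ν₁)
        (f := Function.uncurry C) hC.stronglyMeasurable).measurable
    have hCm₂ : Measurable fun x => ∫ y, C x y ∂ν₂ :=
      (MeasureTheory.StronglyMeasurable.integral_prod_right' (ν := ν₂)
        (f := Function.uncurry C) hC.stronglyMeasurable).measurable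
    have hτcont : Continuous fun p : 𝒳 × 𝒳 => τ p.1 p.2 - τ p.2 p.1 :=
      hτ.sub (hτ.comp continuous_swap)
    have hDm₁ : Measurable fun x => ∫ y, (τ x y - τ y x) ∂ν₁ :=
      (MeasureTheory.StronglyMeasurable.integral_prod_right' (ν := ν₁)
        (f := fun p : 𝒳 × 𝒳 => τ p.1 p.2 - τ p.2 p.1) hτcont.stronglyMeasurable).measurable
    have hDm₂ : Measurable fun x => ∫ y, (τ x y - τ y x) ∂ν₂ :=
      (MeasureTheory.StronglyMeasurable.integral_prod_right' (ν := ν₂)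
        (f := fun p : 𝒳 × 𝒳 => τ p.1 p.2 - τ p.2 p.1) hτcont.stronglyMeasurable).measurable
    -- the first drift integrand and its bound
    have ham₁ : Measurable fun x => (r x - ∫ y, C x y ∂ν₁) * f x :=
      (hr.measurable.sub hCm₁).mul hfm
    have ham₂ : Measurable fun x => (r x - ∫ y, C x y ∂ν₂) * f x :=
      (hr.measurable.sub hCm₂).mul hfm
    have hab₁ : ∀ x, |(r x - ∫ y, C x y ∂ν₁) * f x| ≤ Rb + Cb * Abar + 1 := by
      intro x
      rw [abs_mul]
      have h1 : |r x - ∫ y, C x y ∂ν₁| ≤ Rb + Cb * Abar :=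
        (abs_sub _ _).trans (add_le_add (hRb x) (hCfb ν₁ hν₁ hm1 x))
      calc |r x - ∫ y, C x y ∂ν₁| * |f x| ≤ (Rb + Cb * Abar) * 1 :=
            mul_le_mul h1 (hf1 x) (abs_nonneg _) (by linarith)
        _ ≤ Rb + Cb * Abar + 1 := by linarith
    have hab₂ : ∀ x, |(r x - ∫ y, C x y ∂ν₂) * f x| ≤ Rb + Cb * Abar + 1 := by
      intro x
      rw [abs_mul]
      have h1 : |r x - ∫ y, C x y ∂ν₂| ≤ Rb + Cb * Abar :=
        (abs_sub _ _).trans (add_le_add (hRb x) (hCfb ν₂ hν₂ hm2 x))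
      calc |r x - ∫ y, C x y ∂ν₂| * |f x| ≤ (Rb + Cb * Abar) * 1 :=
            mul_le_mul h1 (hf1 x) (abs_nonneg _) (by linarith)
        _ ≤ Rb + Cb * Abar + 1 := by linarith
    have hT1 : |(∫ x, (r x - ∫ y, C x y ∂ν₁) * f x ∂ν₁)
        - ∫ x, (r x - ∫ y, C x y ∂ν₁) * f x ∂ν₂|
        ≤ (Rb + Cb * Abar + 1) * tvDist ν₁ ν₂ :=
      abs_integral_sub_le_tv' ha1 ham₁ hab₁ ν₁ ν₂
    -- second term
    have hT2 : |(∫ x, (r x - ∫ y, C x y ∂ν₁) * f x ∂ν₂)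
        - ∫ x, (r x - ∫ y, C x y ∂ν₂) * f x ∂ν₂|
        ≤ (Cb + 1) * Abar * tvDist ν₁ ν₂ := by
      rw [← integral_sub (integrable_of_abs_le ham₁ hab₁ ν₂)
        (integrable_of_abs_le ham₂ hab₂ ν₂)]
      have hpt : ∀ x, ‖(r x - ∫ y, C x y ∂ν₁) * f x - (r x - ∫ y, C x y ∂ν₂) * f x‖
          ≤ (Cb + 1) * tvDist ν₁ ν₂ := by
        intro x
        rw [Real.norm_eq_abs]
        have he : (r x - ∫ y, C x y ∂ν₁) * f x - (r x - ∫ y, C x y ∂ν₂) * f x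
            = ((∫ y, C x y ∂ν₁) - ∫ y, C x y ∂ν₂) * (- f x) := by ring
        rw [he, abs_mul]
        have h1 : |(∫ y, C x y ∂ν₁) - ∫ y, C x y ∂ν₂| ≤ (Cb + 1) * tvDist ν₁ ν₂ := by
          refine abs_integral_sub_le_tv' (by linarith) ?_
            (fun y => (hCb x y).trans (by linarith)) ν₁ ν₂
          exact (hC.comp (continuous_const.prodMk continuous_id)).measurable
        calc |(∫ y, C x y ∂ν₁) - ∫ y, C x y ∂ν₂| * |(- f x)|
            ≤ ((Cb + 1) * tvDist ν₁ ν₂) * 1 := by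
              refine mul_le_mul h1 ?_ (abs_nonneg _) (mul_nonneg (by linarith) hφ0)
              rw [abs_neg]; exact hf1 x
          _ = (Cb + 1) * tvDist ν₁ ν₂ := mul_one _
      have h := norm_integral_le_of_norm_le_const (μ := ν₂) (Filter.Eventually.of_forall hpt)
      rw [Real.norm_eq_abs] at h
      calc |∫ x, ((r x - ∫ y, C x y ∂ν₁) * f x - (r x - ∫ y, C x y ∂ν₂) * f x) ∂ν₂|
          ≤ ((Cb + 1) * tvDist ν₁ ν₂) * (ν₂ Set.univ).toReal := h
        _ ≤ ((Cb + 1) * tvDist ν₁ ν₂) * Abar :=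
            mul_le_mul_of_nonneg_left hm2 (mul_nonneg (by linarith) hφ0)
        _ = (Cb + 1) * Abar * tvDist ν₁ ν₂ := by ring
    -- third term
    have hbm₁ : Measurable fun x =>
        f x * (∫ y, (τ x y - τ y x) ∂ν₁) / (β + μ * (ν₁ Set.univ).toReal) :=
      (hfm.mul hDm₁).div_const _
    have hbm₂ : Measurable fun x =>
        f x * (∫ y, (τ x y - τ y x) ∂ν₂) / (β + μ * (ν₂ Set.univ).toReal) :=
      (hfm.mul hDm₂).div_const _
    have hbb₁ : ∀ x, |f x * (∫ y, (τ x y - τ y x) ∂ν₁) / (β + μ * (ν₁ Set.univ).toReal)|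
        ≤ 2 * τb * Abar / β + 1 := by
      intro x
      rw [abs_div, abs_of_pos (lt_of_lt_of_le hβ hq₁), abs_mul]
      have h1 : |f x| * |∫ y, (τ x y - τ y x) ∂ν₁| ≤ 2 * τb * Abar := by
        calc |f x| * |∫ y, (τ x y - τ y x) ∂ν₁| ≤ 1 * (2 * τb * Abar) :=
              mul_le_mul (hf1 x) (hDb ν₁ hν₁ hm1 x) (abs_nonneg _) zero_le_one
          _ = 2 * τb * Abar := one_mul _
      have := div_le_div₀ hτbA h1 hβ hq₁
      linarith
    have hbb₂ : ∀ x, |f x * (∫ y, (τ x y - τ y x) ∂ν₂) / (β + μ * (ν₂ Set.univ).toReal)|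
        ≤ 2 * τb * Abar / β + 1 := by
      intro x
      rw [abs_div, abs_of_pos (lt_of_lt_of_le hβ hq₂), abs_mul]
      have h1 : |f x| * |∫ y, (τ x y - τ y x) ∂ν₂| ≤ 2 * τb * Abar := by
        calc |f x| * |∫ y, (τ x y - τ y x) ∂ν₂| ≤ 1 * (2 * τb * Abar) :=
              mul_le_mul (hf1 x) (hDb ν₂ hν₂ hm2 x) (abs_nonneg _) zero_le_one
          _ = 2 * τb * Abar := one_mul _
      have := div_le_div₀ hτbA h1 hβ hq₂
      linarith
    have hT3 : |(∫ x, f x * (∫ y, (τ x y - τ y x) ∂ν₁) / (β + μ * (ν₁ Set.univ).toReal) ∂ν₁)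
        - ∫ x, f x * (∫ y, (τ x y - τ y x) ∂ν₁) / (β + μ * (ν₁ Set.univ).toReal) ∂ν₂|
        ≤ (2 * τb * Abar / β + 1) * tvDist ν₁ ν₂ :=
      abs_integral_sub_le_tv' ha3 hbm₁ hbb₁ ν₁ ν₂
    -- fourth term
    have hmd : |(ν₁ Set.univ).toReal - (ν₂ Set.univ).toReal| ≤ tvDist ν₁ ν₂ := by
      have h := abs_integral_sub_le_tv (h := fun _ : 𝒳 => (1:ℝ)) measurable_const
        (fun _ => by norm_num) ν₁ ν₂
      simpa [MeasureTheory.integral_const, smul_eq_mul, measureReal_def] using h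
    have hT4 : |(∫ x, f x * (∫ y, (τ x y - τ y x) ∂ν₁) / (β + μ * (ν₁ Set.univ).toReal) ∂ν₂)
        - ∫ x, f x * (∫ y, (τ x y - τ y x) ∂ν₂) / (β + μ * (ν₂ Set.univ).toReal) ∂ν₂|
        ≤ ((2 * τb + 1) / β + 2 * τb * Abar * μ / β ^ 2) * Abar * tvDist ν₁ ν₂ := by
      rw [← integral_sub (integrable_of_abs_le hbm₁ hbb₁ ν₂)
        (integrable_of_abs_le hbm₂ hbb₂ ν₂)]
      have hpt : ∀ x, ‖f x * (∫ y, (τ x y - τ y x) ∂ν₁) / (β + μ * (ν₁ Set.univ).toReal)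
          - f x * (∫ y, (τ x y - τ y x) ∂ν₂) / (β + μ * (ν₂ Set.univ).toReal)‖
          ≤ ((2 * τb + 1) / β + 2 * τb * Abar * μ / β ^ 2) * tvDist ν₁ ν₂ := by
        intro x
        rw [Real.norm_eq_abs]
        have he : f x * (∫ y, (τ x y - τ y x) ∂ν₁) / (β + μ * (ν₁ Set.univ).toReal)
            - f x * (∫ y, (τ x y - τ y x) ∂ν₂) / (β + μ * (ν₂ Set.univ).toReal)
            = f x * ((∫ y, (τ x y - τ y x) ∂ν₁) / (β + μ * (ν₁ Set.univ).toReal)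
                - (∫ y, (τ x y - τ y x) ∂ν₂) / (β + μ * (ν₂ Set.univ).toReal)) := by ring
        rw [he, abs_mul]
        have hD12 : |(∫ y, (τ x y - τ y x) ∂ν₁) - ∫ y, (τ x y - τ y x) ∂ν₂|
            ≤ (2 * τb + 1) * tvDist ν₁ ν₂ := by
          refine abs_integral_sub_le_tv' (by linarith) ?_ (fun y => ?_) ν₁ ν₂
          · exact ((hτ.comp (continuous_const.prodMk continuous_id)).measurable).sub
              ((hτ.comp (continuous_id.prodMk continuous_const)).measurable)
          · have h1 := abs_sub (τ x y) (τ y x)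
            have h2 := hτb x y
            have h3 := hτb y x
            linarith
        have hqd : |(β + μ * (ν₁ Set.univ).toReal) - (β + μ * (ν₂ Set.univ).toReal)|
            ≤ μ * tvDist ν₁ ν₂ := by
          have he2 : (β + μ * (ν₁ Set.univ).toReal) - (β + μ * (ν₂ Set.univ).toReal)
              = μ * ((ν₁ Set.univ).toReal - (ν₂ Set.univ).toReal) := by ring
          rw [he2, abs_mul, abs_of_nonneg hμ]
          exact mul_le_mul_of_nonneg_left hmd hμ
        have hkey := div_sub_div_abs_le hβ hq₁ hq₂
          (p₁ := ∫ y, (τ x y - τ y x) ∂ν₁) (p₂ := ∫ y, (τ x y - τ y x) ∂ν₂)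
        have hD₂b := hDb ν₂ hν₂ hm2 x
        calc |f x| * |(∫ y, (τ x y - τ y x) ∂ν₁) / (β + μ * (ν₁ Set.univ).toReal)
              - (∫ y, (τ x y - τ y x) ∂ν₂) / (β + μ * (ν₂ Set.univ).toReal)|
            ≤ 1 * (|(∫ y, (τ x y - τ y x) ∂ν₁) - ∫ y, (τ x y - τ y x) ∂ν₂| / β
                + |∫ y, (τ x y - τ y x) ∂ν₂|
                  * |(β + μ * (ν₁ Set.univ).toReal) - (β + μ * (ν₂ Set.univ).toReal)| / β ^ 2) :=
              mul_le_mul (hf1 x) hkey (abs_nonneg _) zero_le_one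
          _ = |(∫ y, (τ x y - τ y x) ∂ν₁) - ∫ y, (τ x y - τ y x) ∂ν₂| / β
                + |∫ y, (τ x y - τ y x) ∂ν₂|
                  * |(β + μ * (ν₁ Set.univ).toReal) - (β + μ * (ν₂ Set.univ).toReal)| / β ^ 2
              := one_mul _
          _ ≤ ((2 * τb + 1) * tvDist ν₁ ν₂) / β
                + (2 * τb * Abar) * (μ * tvDist ν₁ ν₂) / β ^ 2 := by
              refine add_le_add ?_ ?_
              · exact div_le_div₀ (mul_nonneg (by linarith) hφ0) hD12 hβ le_rfl
              · refine div_le_div₀ ?_ ?_ hβ2 le_rfl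
                · exact mul_nonneg hτbA (mul_nonneg hμ hφ0)
                · exact mul_le_mul hD₂b hqd (abs_nonneg _) hτbA
          _ = ((2 * τb + 1) / β + 2 * τb * Abar * μ / β ^ 2) * tvDist ν₁ ν₂ := by ring
      have h := norm_integral_le_of_norm_le_const (μ := ν₂) (Filter.Eventually.of_forall hpt)
      rw [Real.norm_eq_abs] at h
      calc |∫ x, (f x * (∫ y, (τ x y - τ y x) ∂ν₁) / (β + μ * (ν₁ Set.univ).toReal)
              - f x * (∫ y, (τ x y - τ y x) ∂ν₂) / (β + μ * (ν₂ Set.univ).toReal)) ∂ν₂|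
          ≤ (((2 * τb + 1) / β + 2 * τb * Abar * μ / β ^ 2) * tvDist ν₁ ν₂)
              * (ν₂ Set.univ).toReal := h
        _ ≤ (((2 * τb + 1) / β + 2 * τb * Abar * μ / β ^ 2) * tvDist ν₁ ν₂) * Abar :=
            mul_le_mul_of_nonneg_left hm2 (mul_nonneg hcst hφ0)
        _ = ((2 * τb + 1) / β + 2 * τb * Abar * μ / β ^ 2) * Abar * tvDist ν₁ ν₂ := by ring
    -- combine the four pieces
    have decomp : ((∫ x, (r x - ∫ y, C x y ∂ν₁) * f x ∂ν₁)
          + ∫ x, f x * (∫ y, (τ x y - τ y x) ∂ν₁) / (β + μ * ((ν₁ Set.univ)).toReal) ∂ν₁)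
        - ((∫ x, (r x - ∫ y, C x y ∂ν₂) * f x ∂ν₂)
          + ∫ x, f x * (∫ y, (τ x y - τ y x) ∂ν₂) / (β + μ * ((ν₂ Set.univ)).toReal) ∂ν₂)
        = ((∫ x, (r x - ∫ y, C x y ∂ν₁) * f x ∂ν₁)
            - ∫ x, (r x - ∫ y, C x y ∂ν₁) * f x ∂ν₂)
          + (((∫ x, (r x - ∫ y, C x y ∂ν₁) * f x ∂ν₂)
              - ∫ x, (r x - ∫ y, C x y ∂ν₂) * f x ∂ν₂)
            + (((∫ x, f x * (∫ y, (τ x y - τ y x) ∂ν₁) / (β + μ * (ν₁ Set.univ).toReal) ∂ν₁)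
                - ∫ x, f x * (∫ y, (τ x y - τ y x) ∂ν₁) / (β + μ * (ν₁ Set.univ).toReal) ∂ν₂)
              + ((∫ x, f x * (∫ y, (τ x y - τ y x) ∂ν₁) / (β + μ * (ν₁ Set.univ).toReal) ∂ν₂)
                - ∫ x, f x * (∫ y, (τ x y - τ y x) ∂ν₂)
                    / (β + μ * (ν₂ Set.univ).toReal) ∂ν₂))) := by ring
    rw [decomp]
    refine ((abs_add_le _ _).trans (add_le_add hT1 ((abs_add_le _ _).trans (add_le_add hT2
      ((abs_add_le _ _).trans (add_le_add hT3 hT4)))))).trans ?_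
    rw [hKcdef]
    apply le_of_eq
    ring
  -- the iterated Gronwall estimate
  have hiter : ∀ n : ℕ, ∀ t ∈ Set.Icc (0:ℝ) T,
      tvDist (ξ₁ t) (ξ₂ t) ≤ 2 * Abar * (Kc ^ n * t ^ n / n.factorial) := by
    intro n
    induction n with
    | zero =>
      intro t ht
      haveI := hfin₁ t; haveI := hfin₂ t
      have hb : tvDist (ξ₁ t) (ξ₂ t) ≤ 2 * Abar := by
        apply tv_le (by linarith) _ _
        intro f hfm hf1
        calc |(∫ x, f x ∂(ξ₁ t)) - ∫ x, f x ∂(ξ₂ t)|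
            ≤ |∫ x, f x ∂(ξ₁ t)| + |∫ x, f x ∂(ξ₂ t)| := abs_sub _ _
          _ ≤ Abar + Abar := add_le_add
              ((abs_integral_le_mass hf1 _).trans (hmass t ht).2.1)
              ((abs_integral_le_mass hf1 _).trans (hmass t ht).2.2.2)
          _ = 2 * Abar := by ring
      simpa using hb
    | succ n ih =>
      intro t ht
      haveI := hfin₁ t; haveI := hfin₂ t
      have ht0 : (0:ℝ) ≤ t := ht.1
      have hcnn : 0 ≤ 2 * Abar * (Kc ^ (n+1) * t ^ (n+1) / (n+1).factorial) :=
        mul_nonneg (by linarith) (div_nonneg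
          (mul_nonneg (pow_nonneg hKc0.le _) (pow_nonneg ht0 _)) (Nat.cast_nonneg _))
      apply tv_le hcnn
      intro f hfm hf1
      obtain ⟨hint₁, heqn₁⟩ := solRewrite ξ₁ hfin₁ (fun s hs => (hmass s hs).2.1) hsol₁ f hfm hf1
      obtain ⟨hint₂, heqn₂⟩ := solRewrite ξ₂ hfin₂ (fun s hs => (hmass s hs).2.2.2) hsol₂ f hfm hf1
      have ediff : (∫ x, f x ∂(ξ₁ t)) - ∫ x, f x ∂(ξ₂ t)
          = ∫ s in (0:ℝ)..t,
              (((∫ x, (r x - ∫ y, C x y ∂(ξ₁ (cl s))) * f x ∂(ξ₁ (cl s)))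
                + ∫ x, f x * (∫ y, (τ x y - τ y x) ∂(ξ₁ (cl s)))
                    / (β + μ * ((ξ₁ (cl s)) Set.univ).toReal) ∂(ξ₁ (cl s)))
              - ((∫ x, (r x - ∫ y, C x y ∂(ξ₂ (cl s))) * f x ∂(ξ₂ (cl s)))
                + ∫ x, f x * (∫ y, (τ x y - τ y x) ∂(ξ₂ (cl s)))
                    / (β + μ * ((ξ₂ (cl s)) Set.univ).toReal) ∂(ξ₂ (cl s)))) := by
        rw [heqn₁ t ht, heqn₂ t ht, hinit,
          intervalIntegral.integral_sub (hint₁ 0 t) (hint₂ 0 t)]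
        ring
      rw [ediff]
      have hbd : ∀ᵐ s ∂(volume.restrict (Set.uIoc (0:ℝ) t)),
          ‖(((∫ x, (r x - ∫ y, C x y ∂(ξ₁ (cl s))) * f x ∂(ξ₁ (cl s)))
                + ∫ x, f x * (∫ y, (τ x y - τ y x) ∂(ξ₁ (cl s)))
                    / (β + μ * ((ξ₁ (cl s)) Set.univ).toReal) ∂(ξ₁ (cl s)))
              - ((∫ x, (r x - ∫ y, C x y ∂(ξ₂ (cl s))) * f x ∂(ξ₂ (cl s)))
                + ∫ x, f x * (∫ y, (τ x y - τ y x) ∂(ξ₂ (cl s)))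
                    / (β + μ * ((ξ₂ (cl s)) Set.univ).toReal) ∂(ξ₂ (cl s))))‖
          ≤ Kc * (2 * Abar * (Kc ^ n * s ^ n / n.factorial)) := by
        refine (ae_restrict_mem measurableSet_uIoc).mono ?_
        intro s hs
        rw [Set.uIoc_of_le ht0] at hs
        have hsmem : s ∈ Set.Icc (0:ℝ) T := ⟨hs.1.le, hs.2.trans ht.2⟩
        haveI := hfin₁ s; haveI := hfin₂ s
        rw [Real.norm_eq_abs, hcleq s hsmem]
        calc |((∫ x, (r x - ∫ y, C x y ∂(ξ₁ s)) * f x ∂(ξ₁ s))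
                + ∫ x, f x * (∫ y, (τ x y - τ y x) ∂(ξ₁ s))
                    / (β + μ * ((ξ₁ s) Set.univ).toReal) ∂(ξ₁ s))
              - ((∫ x, (r x - ∫ y, C x y ∂(ξ₂ s)) * f x ∂(ξ₂ s))
                + ∫ x, f x * (∫ y, (τ x y - τ y x) ∂(ξ₂ s))
                    / (β + μ * ((ξ₂ s) Set.univ).toReal) ∂(ξ₂ s))|
            ≤ Kc * tvDist (ξ₁ s) (ξ₂ s) :=
              hcore f hfm hf1 (ξ₁ s) (ξ₂ s) (hfin₁ s) (hfin₂ s)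
                (hmass s hsmem).2.1 (hmass s hsmem).2.2.2
          _ ≤ Kc * (2 * Abar * (Kc ^ n * s ^ n / n.factorial)) :=
              mul_le_mul_of_nonneg_left (ih s hsmem) hKc0.le
      have hKψcont : Continuous fun s : ℝ => Kc * (2 * Abar * (Kc ^ n * s ^ n / n.factorial)) := by
        fun_prop
      have hKψint : IntervalIntegrable
          (fun s : ℝ => Kc * (2 * Abar * (Kc ^ n * s ^ n / n.factorial))) volume 0 t :=
        hKψcont.intervalIntegrable 0 t
      have hnormle := intervalIntegral.norm_integral_le_abs_of_norm_le hbd hKψint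
      rw [Real.norm_eq_abs] at hnormle
      have hval : (∫ s in (0:ℝ)..t, Kc * (2 * Abar * (Kc ^ n * s ^ n / n.factorial)))
          = 2 * Abar * (Kc ^ (n+1) * t ^ (n+1) / (n+1).factorial) := by
        have hrw : ∀ s : ℝ, Kc * (2 * Abar * (Kc ^ n * s ^ n / n.factorial))
            = (Kc * (2 * Abar * Kc ^ n / n.factorial)) * s ^ n := fun s => by ring
        simp only [hrw]
        rw [intervalIntegral.integral_const_mul, integral_pow]
        have hfact : ((n+1).factorial : ℝ) = ((n:ℝ) + 1) * (n.factorial : ℝ) := by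
          push_cast [Nat.factorial_succ]
          ring
        have hn : (n.factorial : ℝ) ≠ 0 := Nat.cast_ne_zero.mpr n.factorial_ne_zero
        have hn1 : ((n:ℝ) + 1) ≠ 0 := by positivity
        rw [hfact, zero_pow n.succ_ne_zero]
        field_simp
        ring
      refine hnormle.trans ?_
      rw [hval]
      rw [abs_of_nonneg hcnn]
  -- total variation distance vanishes on [0, T]
  have hzero : ∀ t ∈ Set.Icc (0:ℝ) T, tvDist (ξ₁ t) (ξ₂ t) = 0 := by
    intro t ht
    haveI := hfin₁ t; haveI := hfin₂ t
    refine le_antisymm ?_ (tv_nonneg _ _)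
    have hlim : Filter.Tendsto (fun n : ℕ => 2 * Abar * ((Kc * t) ^ n / n.factorial))
        Filter.atTop (nhds 0) := by
      have h := (FloorSemiring.tendsto_pow_div_factorial_atTop (Kc * t)).const_mul (2 * Abar)
      simpa using h
    refine ge_of_tendsto' hlim ?_
    intro n
    calc tvDist (ξ₁ t) (ξ₂ t) ≤ 2 * Abar * (Kc ^ n * t ^ n / n.factorial) := hiter n t ht
      _ = 2 * Abar * ((Kc * t) ^ n / n.factorial) := by rw [mul_pow]
  -- hence the measures coincide
  have hext : ∀ t ∈ Set.Icc (0:ℝ) T, ξ₁ t = ξ₂ t := by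
    intro t ht
    haveI := hfin₁ t; haveI := hfin₂ t
    ext A hA
    have hind := abs_integral_sub_le_tv (h := A.indicator 1) (measurable_one.indicator hA)
      (fun x => by by_cases hx : x ∈ A <;> simp [Set.indicator, hx]) (ξ₁ t) (ξ₂ t)
    rw [integral_indicator_one hA, integral_indicator_one hA, hzero t ht] at hind
    have htr : ((ξ₁ t) A).toReal = ((ξ₂ t) A).toReal :=
      sub_eq_zero.mp (abs_nonpos_iff.mp hind)
    exact (ENNReal.toReal_eq_toReal_iff' (measure_ne_top _ _) (measure_ne_top _ _)).mp htr
  refine ⟨⟨1, one_pos, ?_⟩, hext⟩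
  intro t ht
  rw [hzero t ht]
  have hzint : (∫ s in (0:ℝ)..t, tvDist (ξ₁ s) (ξ₂ s)) = ∫ s in (0:ℝ)..t, (0:ℝ) := by
    apply intervalIntegral.integral_congr
    intro s hs
    rw [Set.uIcc_of_le ht.1] at hs
    exact hzero s ⟨hs.1, hs.2.trans ht.2⟩
  rw [hzint]
  simp
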